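/- Let λ ≥ 0, m ≥ max{2, λ+2}, and let κ : ℝ³ → ℝ satisfy 0 ≤ κ(x) ≤ κ₂⟨x⟩^{−λ} for all x ∈ ℝ³, with κ₂ > 0. Let f : ℝ³×ℝ³ → [0,∞) be measurable with ∫_{ℝ⁶} (1 + |x|^m + |v|^m) f(x,v) dx dv ≤ K < ∞. Define H(x,v) := ∫_{ℝ³} κ(x−y) f(y,v) dy. Then there exists a constant C_H > 0, depending only on κ₂, λ, m and K, such that ∫_{ℝ³} ⟨v⟩² H(x,v) dv ≤ C_H ⟨x⟩^{−λ} for every x ∈ ℝ³. -/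
import Mathlib

open MeasureTheory Real

noncomputable section

abbrev E3 : Type := EuclideanSpace ℝ (Fin 3)

/-- `⟨x⟩ = √(1+|x|²)`. -/
def jap (x : E3) : ℝ := Real.sqrt (1 + ‖x‖ ^ 2)

lemma jap_pos (x : E3) : 0 < jap x := Real.sqrt_pos.2 (by positivity)

lemma one_le_jap (x : E3) : 1 ≤ jap x := by
  have h : (1:ℝ) ≤ 1 + ‖x‖ ^ 2 := le_add_of_nonneg_right (sq_nonneg _)
  calc (1:ℝ) = Real.sqrt 1 := by simp
    _ ≤ jap x := Real.sqrt_le_sqrt h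

lemma jap_sq (x : E3) : jap x ^ 2 = 1 + ‖x‖ ^ 2 := Real.sq_sqrt (by positivity)

/-- Peetre-type inequality. -/
lemma peetre (x y : E3) : jap x ≤ Real.sqrt 2 * (jap (x - y) * jap y) := by
  have hxy : ‖x‖ ≤ ‖x - y‖ + ‖y‖ := by
    simpa using norm_add_le (x - y) y
  rw [jap, jap, jap, ← Real.sqrt_mul (by positivity), ← Real.sqrt_mul (by norm_num)]
  apply Real.sqrt_le_sqrt
  nlinarith [norm_nonneg x, norm_nonneg (x - y), norm_nonneg y,
    sq_nonneg (‖x - y‖ * ‖y‖), sq_nonneg (‖x - y‖ - ‖y‖)]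

lemma peetre_rpow {lam : ℝ} (hlam : 0 ≤ lam) (x y : E3) :
    jap (x - y) ^ (-lam) ≤ (2 : ℝ) ^ (lam / 2) * (jap y ^ lam * jap x ^ (-lam)) := by
  have hx := jap_pos x
  have hxy := jap_pos (x - y)
  have hy := jap_pos y
  have h1 : jap x ^ lam ≤ (Real.sqrt 2 * (jap (x - y) * jap y)) ^ lam :=
    Real.rpow_le_rpow hx.le (peetre x y) hlam
  have h2 : (Real.sqrt 2 * (jap (x - y) * jap y)) ^ lam
      = (2 : ℝ) ^ (lam / 2) * (jap (x - y) ^ lam * jap y ^ lam) := by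
    rw [Real.mul_rpow (Real.sqrt_nonneg 2) (by positivity),
      Real.mul_rpow hxy.le hy.le, Real.sqrt_eq_rpow, ← Real.rpow_mul (by norm_num),
      show (1:ℝ)/2*lam = lam/2 by ring]
  have hAp : 0 < jap (x - y) ^ lam := Real.rpow_pos_of_pos hxy lam
  have hkey : jap x ^ lam * (jap (x - y) ^ lam)⁻¹
      ≤ (2 : ℝ) ^ (lam / 2) * jap y ^ lam := by
    rw [mul_inv_le_iff₀ hAp]
    calc jap x ^ lam ≤ (2 : ℝ) ^ (lam / 2) * (jap (x - y) ^ lam * jap y ^ lam) :=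
          h1.trans_eq h2
      _ = (2 : ℝ) ^ (lam / 2) * jap y ^ lam * jap (x - y) ^ lam := by ring
  have hid : jap (x - y) ^ (-lam)
      = jap x ^ lam * (jap (x - y) ^ lam)⁻¹ * jap x ^ (-lam) := by
    rw [Real.rpow_neg hxy.le, Real.rpow_neg hx.le]
    field_simp
  calc jap (x - y) ^ (-lam)
      = jap x ^ lam * (jap (x - y) ^ lam)⁻¹ * jap x ^ (-lam) := hid
    _ ≤ ((2 : ℝ) ^ (lam / 2) * jap y ^ lam) * jap x ^ (-lam) :=
        mul_le_mul_of_nonneg_right hkey (Real.rpow_nonneg hx.le _)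
    _ = (2 : ℝ) ^ (lam / 2) * (jap y ^ lam * jap x ^ (-lam)) := by ring

lemma jap_rpow_le {m : ℝ} (hm0 : 0 ≤ m) (y : E3) :
    jap y ^ m ≤ (2 : ℝ) ^ m * (1 + ‖y‖ ^ m) := by
  have hy := norm_nonneg y
  have h1 : jap y ≤ 2 * max 1 ‖y‖ := by
    have h2 : 1 + ‖y‖ ^ 2 ≤ (2 * max 1 ‖y‖) ^ 2 := by
      rcases le_total ‖y‖ 1 with h | h
      · rw [max_eq_left h]; nlinarith
      · rw [max_eq_right h]; nlinarith
    calc jap y ≤ Real.sqrt ((2 * max 1 ‖y‖) ^ 2) := Real.sqrt_le_sqrt h2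
      _ = 2 * max 1 ‖y‖ := Real.sqrt_sq (by positivity)
  have h3 : max 1 ‖y‖ ^ m ≤ 1 + ‖y‖ ^ m := by
    rcases le_total ‖y‖ 1 with h | h
    · rw [max_eq_left h, Real.one_rpow]
      exact le_add_of_nonneg_right (Real.rpow_nonneg hy m)
    · rw [max_eq_right h]
      exact le_add_of_nonneg_left zero_le_one
  calc jap y ^ m ≤ (2 * max 1 ‖y‖) ^ m :=
        Real.rpow_le_rpow (jap_pos y).le h1 hm0
    _ = (2 : ℝ) ^ m * max 1 ‖y‖ ^ m := Real.mul_rpow (by norm_num) (by positivity)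
    _ ≤ (2 : ℝ) ^ m * (1 + ‖y‖ ^ m) :=
        mul_le_mul_of_nonneg_left h3 (by positivity)

lemma momA {lam m : ℝ} (hlam : 0 ≤ lam) (hm2 : 2 ≤ m) (hmlam : lam + 2 ≤ m)
    (y v : E3) :
    jap y ^ lam * jap v ^ 2 ≤ (2 : ℝ) ^ (m + 1) * (1 + ‖y‖ ^ m + ‖v‖ ^ m) := by
  have hm0 : (0:ℝ) ≤ m := by linarith
  have ha1 := one_le_jap y
  have hb1 := one_le_jap v
  have ha0 := (jap_pos y).le
  have hb0 := (jap_pos v).le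
  have hsq : jap v ^ 2 = jap v ^ ((2:ℕ):ℝ) := (Real.rpow_natCast _ 2).symm
  have step1 : jap y ^ lam * jap v ^ 2 ≤ jap y ^ (lam + 2) + jap v ^ (lam + 2) := by
    rw [hsq]
    push_cast
    rcases le_total (jap y) (jap v) with h | h
    · have : jap y ^ lam ≤ jap v ^ lam := Real.rpow_le_rpow ha0 h hlam
      calc jap y ^ lam * jap v ^ (2:ℝ) ≤ jap v ^ lam * jap v ^ (2:ℝ) :=
            mul_le_mul_of_nonneg_right this (Real.rpow_nonneg hb0 _)
        _ = jap v ^ (lam + 2) := (Real.rpow_add (jap_pos v) _ _).symm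
        _ ≤ jap y ^ (lam + 2) + jap v ^ (lam + 2) :=
            le_add_of_nonneg_left (Real.rpow_nonneg ha0 _)
    · have : jap v ^ (2:ℝ) ≤ jap y ^ (2:ℝ) := Real.rpow_le_rpow hb0 h (by norm_num)
      calc jap y ^ lam * jap v ^ (2:ℝ) ≤ jap y ^ lam * jap y ^ (2:ℝ) :=
            mul_le_mul_of_nonneg_left this (Real.rpow_nonneg ha0 _)
        _ = jap y ^ (lam + 2) := (Real.rpow_add (jap_pos y) _ _).symm
        _ ≤ jap y ^ (lam + 2) + jap v ^ (lam + 2) :=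
            le_add_of_nonneg_right (Real.rpow_nonneg hb0 _)
  have step2 : jap y ^ (lam + 2) ≤ jap y ^ m :=
    Real.rpow_le_rpow_of_exponent_le ha1 hmlam
  have step3 : jap v ^ (lam + 2) ≤ jap v ^ m :=
    Real.rpow_le_rpow_of_exponent_le hb1 hmlam
  have h4 := jap_rpow_le hm0 y
  have h5 := jap_rpow_le hm0 v
  have h6 : (2:ℝ) ^ (m + 1) = (2:ℝ) ^ m * 2 := by
    rw [Real.rpow_add (by norm_num), Real.rpow_one]
  have h7 : (0:ℝ) ≤ ‖y‖ ^ m := Real.rpow_nonneg (norm_nonneg y) m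
  have h8 : (0:ℝ) ≤ ‖v‖ ^ m := Real.rpow_nonneg (norm_nonneg v) m
  have h9 : (0:ℝ) < (2:ℝ) ^ m := Real.rpow_pos_of_pos (by norm_num) m
  nlinarith

/-- Second-moment bound `∫ ⟨v⟩² H(x,v) dv ≤ C_H ⟨x⟩^{-λ}`
for `H(x,v) = ∫ κ(x-y) f(y,v) dy`, given a moment bound of order `m ≥ max{2, λ+2}` on `f`. -/
theorem statement3 (lam m κ₂ K : ℝ) (hlam : 0 ≤ lam) (hm : max 2 (lam + 2) ≤ m)
    (hκ₂ : 0 < κ₂) (κ : E3 → ℝ) (hκ_meas : Measurable κ)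
    (hκ : ∀ x : E3, 0 ≤ κ x ∧ κ x ≤ κ₂ * jap x ^ (-lam))
    (f : E3 × E3 → ℝ) (hf_meas : Measurable f) (hf_nonneg : ∀ p, 0 ≤ f p)
    (hmom_int : Integrable (fun p : E3 × E3 => (1 + ‖p.1‖ ^ m + ‖p.2‖ ^ m) * f p))
    (hmom : ∫ p : E3 × E3, (1 + ‖p.1‖ ^ m + ‖p.2‖ ^ m) * f p ≤ K) :
    ∃ CH : ℝ, 0 < CH ∧ ∀ x : E3,
      (∫ v : E3, jap v ^ 2 * ∫ y : E3, κ (x - y) * f (y, v)) ≤ CH * jap x ^ (-lam) := by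
  have hm2 : (2:ℝ) ≤ m := le_trans (le_max_left _ _) hm
  have hmlam : lam + 2 ≤ m := le_trans (le_max_right _ _) hm
  set W : E3 × E3 → ℝ := fun p => (1 + ‖p.1‖ ^ m + ‖p.2‖ ^ m) * f p with hWdef
  have hWnn : ∀ p, 0 ≤ W p := fun p => mul_nonneg (by positivity) (hf_nonneg p)
  have hK0 : 0 ≤ K := le_trans (integral_nonneg hWnn) hmom
  set C₀ : ℝ := κ₂ * (2:ℝ) ^ (lam / 2) * (2:ℝ) ^ (m + 1) with hC₀
  have hC₀pos : 0 < C₀ := by positivity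
  refine ⟨C₀ * (K + 1), mul_pos hC₀pos (by linarith), fun x => ?_⟩
  -- the key pointwise inequality
  have key : ∀ y v : E3, jap v ^ 2 * (κ (x - y) * f (y, v))
      ≤ C₀ * jap x ^ (-lam) * W (y, v) := by
    intro y v
    have h1 : κ (x - y) ≤ κ₂ * ((2:ℝ) ^ (lam / 2) * (jap y ^ lam * jap x ^ (-lam))) :=
      (hκ (x - y)).2.trans (mul_le_mul_of_nonneg_left (peetre_rpow hlam x y) hκ₂.le)
    have h2 : jap y ^ lam * jap v ^ 2 ≤ (2:ℝ) ^ (m + 1) * (1 + ‖y‖ ^ m + ‖v‖ ^ m) :=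
      momA hlam hm2 hmlam y v
    have hb : jap v ^ 2 * κ (x - y) ≤ C₀ * jap x ^ (-lam) * (1 + ‖y‖ ^ m + ‖v‖ ^ m) := by
      have hv2 : (0:ℝ) ≤ jap v ^ 2 := sq_nonneg _
      have hc : (0:ℝ) ≤ κ₂ * (2:ℝ) ^ (lam / 2) * jap x ^ (-lam) :=
        mul_nonneg (mul_nonneg hκ₂.le (Real.rpow_nonneg (by norm_num) _))
          (Real.rpow_nonneg (jap_pos x).le _)
      calc jap v ^ 2 * κ (x - y)
          ≤ jap v ^ 2 * (κ₂ * ((2:ℝ) ^ (lam / 2) * (jap y ^ lam * jap x ^ (-lam)))) :=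
            mul_le_mul_of_nonneg_left h1 hv2
        _ = (κ₂ * (2:ℝ) ^ (lam / 2) * jap x ^ (-lam)) * (jap y ^ lam * jap v ^ 2) := by
            ring
        _ ≤ (κ₂ * (2:ℝ) ^ (lam / 2) * jap x ^ (-lam)) *
              ((2:ℝ) ^ (m + 1) * (1 + ‖y‖ ^ m + ‖v‖ ^ m)) :=
            mul_le_mul_of_nonneg_left h2 hc
        _ = C₀ * jap x ^ (-lam) * (1 + ‖y‖ ^ m + ‖v‖ ^ m) := by rw [hC₀]; ring
    calc jap v ^ 2 * (κ (x - y) * f (y, v))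
        = (jap v ^ 2 * κ (x - y)) * f (y, v) := by ring
      _ ≤ (C₀ * jap x ^ (-lam) * (1 + ‖y‖ ^ m + ‖v‖ ^ m)) * f (y, v) :=
          mul_le_mul_of_nonneg_right hb (hf_nonneg _)
      _ = C₀ * jap x ^ (-lam) * W (y, v) := by rw [hWdef]; ring
  have hW : Integrable W ((volume : Measure E3).prod volume) := by
    rw [← MeasureTheory.Measure.volume_eq_prod]; exact hmom_int
  have hWv : ∀ᵐ v : E3, Integrable (fun y => W (y, v)) := hW.prod_left_ae
  have hWint : Integrable (fun v : E3 => ∫ y : E3, W (y, v)) := hW.integral_prod_right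
  have hjx : (0:ℝ) ≤ jap x ^ (-lam) := Real.rpow_nonneg (jap_pos x).le _
  have step : (∫ v : E3, jap v ^ 2 * ∫ y : E3, κ (x - y) * f (y, v))
      ≤ ∫ v : E3, C₀ * jap x ^ (-lam) * ∫ y : E3, W (y, v) := by
    apply integral_mono_of_nonneg
    · filter_upwards with v
      exact mul_nonneg (sq_nonneg _)
        (integral_nonneg fun y => mul_nonneg (hκ _).1 (hf_nonneg _))
    · exact hWint.const_mul _
    · filter_upwards [hWv] with v hv
      rw [← integral_const_mul, ← integral_const_mul]
      apply integral_mono_of_nonneg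
      · filter_upwards with y
        exact mul_nonneg (sq_nonneg _) (mul_nonneg (hκ _).1 (hf_nonneg _))
      · exact hv.const_mul _
      · filter_upwards with y
        exact key y v
  have swap : (∫ v : E3, ∫ y : E3, W (y, v)) = ∫ p : E3 × E3, W p := by
    rw [MeasureTheory.Measure.volume_eq_prod, integral_prod_symm W hW]
  calc (∫ v : E3, jap v ^ 2 * ∫ y : E3, κ (x - y) * f (y, v))
      ≤ ∫ v : E3, C₀ * jap x ^ (-lam) * ∫ y : E3, W (y, v) := step
    _ = C₀ * jap x ^ (-lam) * ∫ v : E3, ∫ y : E3, W (y, v) := integral_const_mul _ _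
    _ = C₀ * jap x ^ (-lam) * ∫ p : E3 × E3, W p := by rw [swap]
    _ ≤ C₀ * jap x ^ (-lam) * (K + 1) := by
        apply mul_le_mul_of_nonneg_left _ (mul_nonneg hC₀pos.le hjx)
        linarith [hmom]
    _ = C₀ * (K + 1) * jap x ^ (-lam) := by ring
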